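/- Let (T_t)_{t ≥ 0} be a strongly continuous semigroup of operators on a separable infinite-dimensional complex Banach space X. The following assertions are equivalent: (1) (T_t)_{t ≥ 0} is diskcyclic; (2) for all y, z ∈ X and all ε > 0 there exist v ∈ X, t > 0 and α ∈ 𝔻 such that ‖y − v‖ < ε and ‖z − α T_t v‖ < ε; (3) for all y, z ∈ X, all ε > 0 and all l ≥ 0, there exist v ∈ X, t > l and α ∈ 𝔻 such that ‖y − v‖ < ε and ‖z − α T_t v‖ < ε. -/

import Mathlib

open scoped NNReal
open Metric Set TopologicalSpace

/-- In an infinite-dimensional normed space, compact sets have empty interior. -/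
lemma aux_compact_interior_empty {X : Type*} [NormedAddCommGroup X] [NormedSpace ℂ X]
    (hinf : ¬ FiniteDimensional ℂ X) {K : Set X} (hK : IsCompact K) :
    interior K = ∅ := by
  by_contra h
  obtain ⟨x, hx⟩ := Set.nonempty_iff_ne_empty.2 h
  obtain ⟨r, hr, hball⟩ := Metric.isOpen_iff.1 isOpen_interior x hx
  have hsub : Metric.closedBall x (r / 2) ⊆ K :=
    (Metric.closedBall_subset_ball (half_lt_self hr)).trans (hball.trans interior_subset)
  exact hinf <| FiniteDimensional.of_isCompact_closedBall ℂ (half_pos hr)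
    (hK.of_isClosed_subset Metric.isClosed_closedBall hsub)

/-- If `K ∪ S` is dense, `K` is closed and has empty interior, then `S` is dense. -/
lemma aux_dense_of_union {X : Type*} [TopologicalSpace X] {K S : Set X}
    (hd : Dense (K ∪ S)) (hKc : IsClosed K) (hKi : interior K = ∅) : Dense S := by
  rw [dense_iff_closure_eq] at hd ⊢
  rw [closure_union] at hd
  by_contra h
  have h1 : (closure S)ᶜ ⊆ K := by
    intro x hx
    have : x ∈ closure K ∪ closure S := hd ▸ Set.mem_univ x
    rcases this with h2 | h2
    · exact hKc.closure_eq ▸ h2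
    · exact absurd h2 hx
  have h2 : (closure S)ᶜ ⊆ interior K :=
    interior_maximal h1 isClosed_closure.isOpen_compl
  have h3 : (closure S)ᶜ = ∅ := Set.subset_eq_empty (hKi ▸ h2) rfl
  exact h (by simpa [Set.compl_empty_iff] using h3)

/-- For a strongly continuous semigroup `(T t)` on a separable infinite-dimensional
complex Banach space, diskcyclicity is equivalent to each of two approximation
properties. -/
theorem stmt_14 {X : Type*} [NormedAddCommGroup X] [NormedSpace ℂ X] [CompleteSpace X]
    [TopologicalSpace.SeparableSpace X] (hinf : ¬ FiniteDimensional ℂ X)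
    (T : ℝ≥0 → X →L[ℂ] X)
    (hT0 : T 0 = ContinuousLinearMap.id ℂ X)
    (hTadd : ∀ t s : ℝ≥0, T (t + s) = T t ∘L T s)
    (hTcont : ∀ x : X, Continuous fun t : ℝ≥0 => T t x) :
    ((∃ x : X, Dense {y : X | ∃ α : ℂ, ‖α‖ ≤ 1 ∧ ∃ t : ℝ≥0, y = α • T t x}) ↔
      (∀ y z : X, ∀ ε : ℝ, 0 < ε → ∃ (v : X) (t : ℝ≥0) (α : ℂ), 0 < t ∧ ‖α‖ ≤ 1 ∧
        ‖y - v‖ < ε ∧ ‖z - α • T t v‖ < ε)) ∧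
    ((∃ x : X, Dense {y : X | ∃ α : ℂ, ‖α‖ ≤ 1 ∧ ∃ t : ℝ≥0, y = α • T t x}) ↔
      (∀ y z : X, ∀ ε : ℝ, 0 < ε → ∀ l : ℝ≥0, ∃ (v : X) (t : ℝ≥0) (α : ℂ),
        l < t ∧ ‖α‖ ≤ 1 ∧ ‖y - v‖ < ε ∧ ‖z - α • T t v‖ < ε)) := by
  haveI : Nonempty X := ⟨0⟩
  haveI : Nontrivial X := by
    by_contra h
    rw [not_nontrivial_iff_subsingleton] at h
    exact hinf inferInstance
  -- (1) → (3)
  have h13 : (∃ x : X, Dense {y : X | ∃ α : ℂ, ‖α‖ ≤ 1 ∧ ∃ t : ℝ≥0, y = α • T t x}) →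
      (∀ y z : X, ∀ ε : ℝ, 0 < ε → ∀ l : ℝ≥0, ∃ (v : X) (t : ℝ≥0) (α : ℂ),
        l < t ∧ ‖α‖ ≤ 1 ∧ ‖y - v‖ < ε ∧ ‖z - α • T t v‖ < ε) := by
    rintro ⟨x, hx⟩ y z ε hε l
    -- choose y' near y with ‖y'‖ ≥ ε/4
    obtain ⟨y', hy'1, hy'2⟩ : ∃ y' : X, ‖y - y'‖ ≤ ε / 2 ∧ ε / 4 ≤ ‖y'‖ := by
      by_cases hy : ε / 4 ≤ ‖y‖
      · exact ⟨y, by simp [le_of_lt (half_pos hε)], hy⟩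
      · obtain ⟨u, hu⟩ := exists_ne (0 : X)
        have hun : (0:ℝ) < ‖u‖ := norm_pos_iff.2 hu
        refine ⟨y + ((ε / 2 / ‖u‖ : ℝ) : ℂ) • u, ?_, ?_⟩
        · have : ‖((ε / 2 / ‖u‖ : ℝ) : ℂ) • u‖ = ε / 2 := by
            rw [norm_smul, Complex.norm_real, Real.norm_eq_abs,
              abs_of_pos (by positivity)]
            field_simp
          simp only [sub_add_cancel_left, norm_neg]
          rw [this]
        · have h1 : ‖((ε / 2 / ‖u‖ : ℝ) : ℂ) • u‖ = ε / 2 := by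
            rw [norm_smul, Complex.norm_real, Real.norm_eq_abs,
              abs_of_pos (by positivity)]
            field_simp
          have h3 : ‖((ε / 2 / ‖u‖ : ℝ) : ℂ) • u‖
              ≤ ‖y + ((ε / 2 / ‖u‖ : ℝ) : ℂ) • u‖ + ‖y‖ := by
            calc ‖((ε / 2 / ‖u‖ : ℝ) : ℂ) • u‖
                = ‖(y + ((ε / 2 / ‖u‖ : ℝ) : ℂ) • u) - y‖ := by
                  rw [add_sub_cancel_left]
            _ ≤ ‖y + ((ε / 2 / ‖u‖ : ℝ) : ℂ) • u‖ + ‖y‖ := norm_sub_le _ _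
          push_neg at hy
          linarith
    -- approximate y' within ε/8 by an orbit element, forcing α₁ ≠ 0
    obtain ⟨v, hv, hvmem⟩ := hx.exists_dist_lt y' (show (0:ℝ) < ε / 8 by positivity)
    obtain ⟨α₁, hα₁, t₁, rfl⟩ := hv
    rw [dist_eq_norm] at hvmem
    have hvnorm : ε / 8 ≤ ‖α₁ • T t₁ x‖ := by
      have := norm_sub_norm_le y' (α₁ • T t₁ x)
      linarith
    have hα₁ne : α₁ ≠ 0 := by
      intro h
      rw [h, zero_smul, norm_zero] at hvnorm
      linarith
    have hyv : ‖y - α₁ • T t₁ x‖ < ε := by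
      calc ‖y - α₁ • T t₁ x‖ = dist y (α₁ • T t₁ x) := (dist_eq_norm _ _).symm
      _ ≤ dist y y' + dist y' (α₁ • T t₁ x) := dist_triangle _ _ _
      _ = ‖y - y'‖ + ‖y' - α₁ • T t₁ x‖ := by rw [dist_eq_norm, dist_eq_norm]
      _ < ε := by linarith
    -- the tail of the disk-orbit is dense
    set L : ℝ≥0 := t₁ + l + 1 with hL
    set K : Set X := (fun p : ℂ × ℝ≥0 => p.1 • T p.2 x) ''
      (Metric.closedBall (0:ℂ) 1 ×ˢ Set.Icc 0 L) with hK
    have hKcomp : IsCompact K :=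
      ((isCompact_closedBall (0:ℂ) 1).prod isCompact_Icc).image
        (continuous_fst.smul ((hTcont x).comp continuous_snd))
    set Stail : Set X := {w : X | ∃ α : ℂ, ‖α‖ ≤ 1 ∧ ∃ t : ℝ≥0, L ≤ t ∧ w = α • T t x}
      with hStail
    have hdense : Dense Stail := by
      apply aux_dense_of_union (K := K) ?_ hKcomp.isClosed
        (aux_compact_interior_empty hinf hKcomp)
      apply hx.mono
      rintro w ⟨α, hα, t, rfl⟩
      by_cases ht : t ≤ L
      · exact Or.inl ⟨(α, t), ⟨mem_closedBall_zero_iff.2 hα, ⟨zero_le, ht⟩⟩, rfl⟩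
      · exact Or.inr ⟨α, hα, t, le_of_lt (not_le.1 ht), rfl⟩
    -- scale the target and approximate with the tail
    set δ : ℝ := min ‖α₁‖ 1 with hδ
    have hδpos : 0 < δ := lt_min (norm_pos_iff.2 hα₁ne) one_pos
    obtain ⟨w, hw, hwmem⟩ := hdense.exists_dist_lt (((δ:ℂ))⁻¹ • z)
      (show (0:ℝ) < ε / δ by positivity)
    obtain ⟨β, hβ, t₂, ht₂, rfl⟩ := hw
    rw [dist_eq_norm] at hwmem
    have hδC : (δ : ℂ) ≠ 0 := by
      simpa using ne_of_gt hδpos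
    -- key norm estimate
    have hz2 : ‖z - ((δ:ℂ) * β) • T t₂ x‖ < ε := by
      have : z - ((δ:ℂ) * β) • T t₂ x = (δ:ℂ) • (((δ:ℂ))⁻¹ • z - β • T t₂ x) := by
        rw [smul_sub, smul_smul, smul_smul, mul_inv_cancel₀ hδC, one_smul]
      rw [this, norm_smul, Complex.norm_real, Real.norm_eq_abs, abs_of_pos hδpos]
      calc δ * ‖((δ:ℂ))⁻¹ • z - β • T t₂ x‖ < δ * (ε / δ) :=
            (mul_lt_mul_iff_right₀ hδpos).2 hwmem
      _ = ε := by field_simp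
    -- assemble
    have ht₁t₂ : t₁ ≤ t₂ := (le_self_add.trans le_self_add).trans ht₂
    refine ⟨α₁ • T t₁ x, t₂ - t₁, ((δ:ℂ) * β) / α₁, ?_, ?_, hyv, ?_⟩
    · have h1 : t₁ + (l + 1) ≤ t₂ := by
        rw [hL] at ht₂; rwa [add_assoc] at ht₂
      have h2 : l + 1 ≤ t₂ - t₁ := le_tsub_of_add_le_left h1
      exact lt_of_lt_of_le (lt_add_one l) h2
    · rw [norm_div, norm_mul, Complex.norm_real, Real.norm_eq_abs, abs_of_pos hδpos]
      rw [div_le_one (norm_pos_iff.2 hα₁ne)]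
      calc δ * ‖β‖ ≤ δ * 1 := by
            exact mul_le_mul_of_nonneg_left hβ (le_of_lt hδpos)
      _ = δ := mul_one δ
      _ ≤ ‖α₁‖ := min_le_left _ _
    · have hcomp : (((δ:ℂ) * β) / α₁) • T (t₂ - t₁) (α₁ • T t₁ x)
          = ((δ:ℂ) * β) • T t₂ x := by
        rw [map_smul, smul_smul, div_mul_cancel₀ _ hα₁ne]
        congr 1
        have : T (t₂ - t₁ + t₁) = T (t₂ - t₁) ∘L T t₁ := hTadd _ _
        rw [tsub_add_cancel_of_le ht₁t₂] at this
        rw [this]; rfl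
      rw [hcomp]; exact hz2
  -- (2) → (1) via Baire category
  have h21 : (∀ y z : X, ∀ ε : ℝ, 0 < ε → ∃ (v : X) (t : ℝ≥0) (α : ℂ), 0 < t ∧ ‖α‖ ≤ 1 ∧
        ‖y - v‖ < ε ∧ ‖z - α • T t v‖ < ε) →
      (∃ x : X, Dense {y : X | ∃ α : ℂ, ‖α‖ ≤ 1 ∧ ∃ t : ℝ≥0, y = α • T t x}) := by
    intro h2
    set u : ℕ → X := TopologicalSpace.denseSeq X with hu
    have hud : DenseRange u := TopologicalSpace.denseRange_denseSeq X
    set U : ℕ × ℕ → Set X := fun p =>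
      {x : X | ∃ α : ℂ, ‖α‖ ≤ 1 ∧ ∃ t : ℝ≥0, ‖u p.1 - α • T t x‖ < 1 / (p.2 + 1)} with hU
    have hopen : ∀ p, IsOpen (U p) := by
      intro p
      have : U p = ⋃ (α : ℂ) (_ : ‖α‖ ≤ 1) (t : ℝ≥0),
          {x : X | ‖u p.1 - α • T t x‖ < 1 / (p.2 + 1)} := by
        ext w; simp [hU]
      rw [this]
      refine isOpen_iUnion fun α => isOpen_iUnion fun hα => isOpen_iUnion fun t => ?_
      exact isOpen_lt (Continuous.norm (continuous_const.sub
        (((T t).continuous).const_smul α))) continuous_const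
    have hUdense : ∀ p, Dense (U p) := by
      intro p
      rw [Metric.dense_iff]
      intro w r hr
      have hm : (0:ℝ) < min r (1 / (p.2 + 1)) := lt_min hr (by positivity)
      obtain ⟨v, t, α, ht, hα, hwv, hz⟩ := h2 w (u p.1) _ hm
      refine ⟨v, ?_, α, hα, t, lt_of_lt_of_le hz (min_le_right _ _)⟩
      rw [Metric.mem_ball, dist_eq_norm, ← norm_neg, neg_sub]
      exact lt_of_lt_of_le hwv (min_le_left _ _)
    have hD : Dense (⋂ p, U p) := dense_iInter_of_isOpen hopen hUdense
    obtain ⟨x, hxmem⟩ := hD.nonempty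
    refine ⟨x, ?_⟩
    rw [Metric.dense_iff]
    intro z r hr
    obtain ⟨n, hn⟩ := Metric.denseRange_iff.1 hud z (r / 2) (half_pos hr)
    obtain ⟨m, hm⟩ := exists_nat_one_div_lt (half_pos hr)
    have hx' : x ∈ U (n, m) := Set.mem_iInter.1 hxmem (n, m)
    obtain ⟨α, hα, t, hlt⟩ := hx'
    refine ⟨α • T t x, ?_, α, hα, t, rfl⟩
    rw [Metric.mem_ball, dist_eq_norm]
    calc ‖α • T t x - z‖ ≤ ‖α • T t x - u n‖ + ‖u n - z‖ := by
          have := norm_add_le (α • T t x - u n) (u n - z); simpa using this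
    _ < r / 2 + r / 2 := by
        apply add_lt_add
        · rw [← norm_neg, neg_sub]
          exact lt_trans hlt (by exact_mod_cast hm)
        · rw [← dist_eq_norm, dist_comm]; exact hn
    _ = r := add_halves r
  have h32 : (∀ y z : X, ∀ ε : ℝ, 0 < ε → ∀ l : ℝ≥0, ∃ (v : X) (t : ℝ≥0) (α : ℂ),
        l < t ∧ ‖α‖ ≤ 1 ∧ ‖y - v‖ < ε ∧ ‖z - α • T t v‖ < ε) →
      (∀ y z : X, ∀ ε : ℝ, 0 < ε → ∃ (v : X) (t : ℝ≥0) (α : ℂ), 0 < t ∧ ‖α‖ ≤ 1 ∧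
        ‖y - v‖ < ε ∧ ‖z - α • T t v‖ < ε) := by
    intro h3 y z ε hε
    obtain ⟨v, t, α, ht, hα, h1, h2⟩ := h3 y z ε hε 0
    exact ⟨v, t, α, ht, hα, h1, h2⟩
  exact ⟨⟨fun h1 => h32 (h13 h1), h21⟩, ⟨h13, fun h3 => h21 (h32 h3)⟩⟩
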